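/- Stochastic dominance for monotone union-of-intersections events (Lemma 2.6): let (Ω, 𝒫) be a probability space, n ∈ ℕ, and let (Y_j)_{j∈Fin n} and (Z_j)_{j∈Fin n} be two families of real-valued random variables such that the Y_j are mutually independent, the Z_j are mutually independent, and for every j and every u ∈ ℝ, 𝒫[Y_j ≥ u] ≥ 𝒫[Z_j ≥ u] (Y_j stochastically dominates Z_j). Let R be a finite index set and for each h ∈ R let P_h ⊆ Fin n and t_h ∈ ℝ. Then 𝒫[⋃_{h∈R} ⋂_{j∈P_h} {Y_j ≥ t_h}] ≥ 𝒫[⋃_{h∈R} ⋂_{j∈P_h} {Z_j ≥ t_h}]. -/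

import Mathlib

open MeasureTheory ProbabilityTheory

section Aux

open Set

/-- The class of subsets of `ℝ` that are `∅`, `univ`, or a closed ray `Ici c`. -/
def SDRayClass : Set (Set ℝ) := {s | s = ∅ ∨ s = Set.univ ∨ ∃ c, s = Set.Ici c}

lemma SDRayClass.measurableSet {s : Set ℝ} (hs : s ∈ SDRayClass) : MeasurableSet s := by
  rcases hs with rfl | rfl | ⟨c, rfl⟩
  · exact MeasurableSet.empty
  · exact MeasurableSet.univ
  · exact measurableSet_Ici

lemma SDRayClass.union {s u : Set ℝ} (hs : s ∈ SDRayClass) (hu : u ∈ SDRayClass) :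
    s ∪ u ∈ SDRayClass := by
  rcases hs with rfl | rfl | ⟨c, rfl⟩
  · rw [Set.empty_union]; exact hu
  · right; left; simp
  · rcases hu with rfl | rfl | ⟨d, rfl⟩
    · right; right; exact ⟨c, by simp⟩
    · right; left; simp
    · right; right
      refine ⟨min c d, ?_⟩
      ext y; simp [min_le_iff]

lemma SDRayClass.measure_le {s : Set ℝ} (hs : s ∈ SDRayClass) (ν κ : Measure ℝ)
    [IsProbabilityMeasure ν] [IsProbabilityMeasure κ]
    (hd : ∀ c, ν (Set.Ici c) ≤ κ (Set.Ici c)) : ν s ≤ κ s := by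
  rcases hs with rfl | rfl | ⟨c, rfl⟩
  · simp
  · simp
  · exact hd c

/-- `lmarginal` only depends on the measures at coordinates in `s`. -/
lemma lmarginal_congr_family {δ : Type*} [DecidableEq δ] {π : δ → Type*}
    [∀ i, MeasurableSpace (π i)] (μ μ' : ∀ i, Measure (π i)) (s : Finset δ)
    (h : ∀ i ∈ s, μ i = μ' i) (f : (∀ i, π i) → ENNReal) :
    lmarginal μ s f = lmarginal μ' s f := by
  have : (fun i : s => μ i) = fun i : s => μ' i := funext fun i => h i i.2
  unfold lmarginal
  rw [this]

/-- The one-coordinate swap step: replacing the `i`-th marginal by a stochastically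
dominating one increases the measure of a set all of whose `i`-sections are rays. -/
lemma sd_swap_step {n : ℕ} (m m' : Fin n → Measure ℝ)
    [∀ j, IsProbabilityMeasure (m j)] [∀ j, IsProbabilityMeasure (m' j)]
    (i : Fin n) (hij : ∀ j, j ≠ i → m j = m' j)
    (hdomi : ∀ c, m i (Set.Ici c) ≤ m' i (Set.Ici c))
    {S : Set (Fin n → ℝ)} (hS : MeasurableSet S)
    (hsec : ∀ x : Fin n → ℝ, {y | Function.update x i y ∈ S} ∈ SDRayClass) :
    Measure.pi m S ≤ Measure.pi m' S := by
  classical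
  set f : (Fin n → ℝ) → ENNReal := S.indicator 1 with hfdef
  have hf : Measurable f := measurable_one.indicator hS
  set x0 : Fin n → ℝ := fun _ => 0 with hx0
  have huniv : (Finset.univ : Finset (Fin n)) = Finset.univ.erase i ∪ {i} := by
    ext j; by_cases h : j = i <;> simp [h]
  have hdisj : Disjoint (Finset.univ.erase i) ({i} : Finset (Fin n)) := by
    simp
  have hinner : ∀ (μ : Fin n → Measure ℝ) (_ : ∀ j, IsProbabilityMeasure (μ j)),
      lmarginal μ {i} f = fun x => μ i {y | Function.update x i y ∈ S} := by
    intro μ _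
    funext x
    rw [lmarginal_singleton]
    have : ∀ y : ℝ, f (Function.update x i y) =
        ({y | Function.update x i y ∈ S} : Set ℝ).indicator 1 y := by
      intro y
      by_cases h : Function.update x i y ∈ S <;>
        simp [hfdef, Set.indicator, h]
    simp_rw [this]
    rw [lintegral_indicator_one (SDRayClass.measurableSet (hsec x))]
  have key : ∀ (μ : Fin n → Measure ℝ) (_ : ∀ j, IsProbabilityMeasure (μ j)),
      Measure.pi μ S = lmarginal μ (Finset.univ.erase i)
        (fun x => μ i {y | Function.update x i y ∈ S}) x0 := by
    intro μ hμ
    have h1 : Measure.pi μ S = ∫⁻ x, f x ∂(Measure.pi μ) :=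
      (lintegral_indicator_one hS).symm
    rw [h1, lintegral_eq_lmarginal_univ x0]
    conv_lhs => rw [huniv]
    rw [lmarginal_union μ f hf hdisj, hinner μ hμ]
  rw [key m inferInstance, key m' inferInstance]
  calc lmarginal m (Finset.univ.erase i)
        (fun x => m i {y | Function.update x i y ∈ S}) x0
      ≤ lmarginal m (Finset.univ.erase i)
        (fun x => m' i {y | Function.update x i y ∈ S}) x0 := by
        refine lmarginal_mono (fun x => ?_) x0
        exact SDRayClass.measure_le (hsec x) (m i) (m' i) hdomi
    _ = lmarginal m' (Finset.univ.erase i)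
        (fun x => m' i {y | Function.update x i y ∈ S}) x0 := by
        rw [lmarginal_congr_family m m' _
          (fun j hj => hij j (Finset.ne_of_mem_erase hj))]

/-- Sections of the union-of-intersections event are rays. -/
lemma sd_section_mem {n : ℕ} {ρ : Type*} (R : Finset ρ) (P : ρ → Finset (Fin n)) (t : ρ → ℝ)
    (x : Fin n → ℝ) (i : Fin n) :
    {y : ℝ | Function.update x i y ∈
      ⋃ h ∈ R, ⋂ j ∈ P h, {v : Fin n → ℝ | t h ≤ v j}} ∈ SDRayClass := by
  classical
  induction R using Finset.induction with
  | empty => left; simp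
  | @insert a A ha ih =>
    have hsplit : {y : ℝ | Function.update x i y ∈
        ⋃ h ∈ insert a A, ⋂ j ∈ P h, {v : Fin n → ℝ | t h ≤ v j}} =
        {y : ℝ | Function.update x i y ∈ ⋂ j ∈ P a, {v : Fin n → ℝ | t a ≤ v j}} ∪
        {y : ℝ | Function.update x i y ∈
          ⋃ h ∈ A, ⋂ j ∈ P h, {v : Fin n → ℝ | t h ≤ v j}} := by
      ext y; simp [Set.mem_iUnion]
    rw [hsplit]
    refine SDRayClass.union ?_ ih
    by_cases hcond : ∀ j ∈ P a, j ≠ i → t a ≤ x j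
    · by_cases hi : i ∈ P a
      · right; right
        refine ⟨t a, ?_⟩
        ext y
        simp only [Set.mem_setOf_eq, Set.mem_iInter, Set.mem_Ici]
        constructor
        · intro h
          have := h i hi
          simpa using this
        · intro h j hj
          by_cases hji : j = i
          · subst hji; simpa using h
          · rw [Function.update_of_ne hji]
            exact hcond j hj hji
      · right; left
        ext y
        simp only [Set.mem_setOf_eq, Set.mem_iInter, Set.mem_univ, iff_true]
        intro j hj
        have hji : j ≠ i := fun h => hi (h ▸ hj)
        rw [Function.update_of_ne hji]
        exact hcond j hj hji
    · left
      push_neg at hcond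
      obtain ⟨j, hj, hji, hlt⟩ := hcond
      ext y
      simp only [Set.mem_setOf_eq, Set.mem_iInter, Set.mem_empty_iff_false, iff_false]
      intro h
      have := h j hj
      rw [Function.update_of_ne hji] at this
      exact absurd this (not_le.mpr hlt)

/-- Monotone comparison for product measures. -/
lemma sd_pi_le {n : ℕ} (ν κ : Fin n → Measure ℝ)
    [∀ j, IsProbabilityMeasure (ν j)] [∀ j, IsProbabilityMeasure (κ j)]
    (hdom : ∀ j c, ν j (Set.Ici c) ≤ κ j (Set.Ici c))
    {ρ : Type*} (R : Finset ρ) (P : ρ → Finset (Fin n)) (t : ρ → ℝ) :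
    Measure.pi ν (⋃ h ∈ R, ⋂ j ∈ P h, {v : Fin n → ℝ | t h ≤ v j}) ≤
      Measure.pi κ (⋃ h ∈ R, ⋂ j ∈ P h, {v : Fin n → ℝ | t h ≤ v j}) := by
  classical
  set S : Set (Fin n → ℝ) := ⋃ h ∈ R, ⋂ j ∈ P h, {v : Fin n → ℝ | t h ≤ v j} with hSdef
  have hS : MeasurableSet S := by
    refine MeasurableSet.biUnion R.countable_toSet (fun h _ => ?_)
    refine MeasurableSet.biInter (Set.to_countable _) (fun j _ => ?_)
    exact measurableSet_Ici.preimage (measurable_pi_apply j)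
  have hsec : ∀ (i : Fin n) (x : Fin n → ℝ),
      {y : ℝ | Function.update x i y ∈ S} ∈ SDRayClass :=
    fun i x => sd_section_mem R P t x i
  have key : ∀ A : Finset (Fin n),
      Measure.pi ν S ≤ Measure.pi (fun j => if j ∈ A then κ j else ν j) S := by
    intro A
    induction A using Finset.induction with
    | empty => simp
    | @insert a A ha ih =>
      haveI h1 : ∀ j, IsProbabilityMeasure ((fun j => if j ∈ A then κ j else ν j) j) := by
        intro j; by_cases h : j ∈ A <;> simp only [h, if_true, if_false] <;> infer_instance
      haveI h2 : ∀ j, IsProbabilityMeasure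
          ((fun j => if j ∈ insert a A then κ j else ν j) j) := by
        intro j; by_cases h : j ∈ insert a A <;> simp only [h, if_true, if_false] <;>
          infer_instance
      refine ih.trans (sd_swap_step _ _ a ?_ ?_ hS (hsec a))
      · intro j hj
        simp only [Finset.mem_insert]
        by_cases h : j ∈ A
        · simp [h]
        · simp [h, hj]
      · intro c
        simp only [ha, if_false, Finset.mem_insert_self, if_true]
        exact hdom a c
  have := key Finset.univ
  simpa using this

/-- If `X j` are independent, the joint law is the product of the marginals. -/
lemma sd_map_pi {Ω : Type*} [MeasurableSpace Ω] (μ : Measure Ω) [IsProbabilityMeasure μ]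
    {n : ℕ} (X : Fin n → Ω → ℝ) (hX : ∀ j, Measurable (X j))
    (hind : iIndepFun X μ) :
    μ.map (fun ω j => X j ω) = Measure.pi (fun j => μ.map (X j)) := by
  haveI : ∀ j, IsProbabilityMeasure (μ.map (X j)) :=
    fun j => Measure.isProbabilityMeasure_map (hX j).aemeasurable
  refine (Measure.pi_eq ?_).symm
  intro s hs
  rw [Measure.map_apply (measurable_pi_lambda _ hX) (MeasurableSet.univ_pi hs)]
  have hpre : (fun ω j => X j ω) ⁻¹' Set.pi Set.univ s = ⋂ j, X j ⁻¹' s j := by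
    ext ω; simp [Set.mem_pi]
  rw [hpre, hind.meas_iInter (fun j => ⟨s j, hs j, rfl⟩)]
  exact Finset.prod_congr rfl fun j _ => (Measure.map_apply (hX j) (hs j)).symm

end Aux

/-- **Stochastic dominance for monotone union-of-intersections events (Lemma 2.6).**
Let `(Y j)` and `(Z j)` be two families of real random variables on a probability space,
each mutually independent, with `Y j` stochastically dominating `Z j` for every `j`.
Then for any finite index set `R`, sets `P h ⊆ Fin n` and thresholds `t h`,
`Pr[⋃_{h ∈ R} ⋂_{j ∈ P h} {Y j ≥ t h}] ≥ Pr[⋃_{h ∈ R} ⋂_{j ∈ P h} {Z j ≥ t h}]`. -/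
theorem monotone_event_stochastic_dominance
    {Ω : Type*} [MeasurableSpace Ω] (μ : Measure Ω) [IsProbabilityMeasure μ]
    (n : ℕ) (Y Z : Fin n → Ω → ℝ)
    (hYmeas : ∀ j, Measurable (Y j)) (hZmeas : ∀ j, Measurable (Z j))
    (hYindep : iIndepFun Y μ)
    (hZindep : iIndepFun Z μ)
    (hdom : ∀ (j : Fin n) (u : ℝ), μ {ω | u ≤ Z j ω} ≤ μ {ω | u ≤ Y j ω})
    {ρ : Type*} (R : Finset ρ) (P : ρ → Finset (Fin n)) (t : ρ → ℝ) :
    μ (⋃ h ∈ R, ⋂ j ∈ P h, {ω | t h ≤ Z j ω}) ≤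
      μ (⋃ h ∈ R, ⋂ j ∈ P h, {ω | t h ≤ Y j ω}) := by
  classical
  set S : Set (Fin n → ℝ) := ⋃ h ∈ R, ⋂ j ∈ P h, {v : Fin n → ℝ | t h ≤ v j} with hSdef
  have hS : MeasurableSet S := by
    refine MeasurableSet.biUnion R.countable_toSet (fun h _ => ?_)
    refine MeasurableSet.biInter (Set.to_countable _) (fun j _ => ?_)
    exact measurableSet_Ici.preimage (measurable_pi_apply j)
  have hevent : ∀ (X : Fin n → Ω → ℝ),
      (⋃ h ∈ R, ⋂ j ∈ P h, {ω | t h ≤ X j ω}) = (fun ω j => X j ω) ⁻¹' S := by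
    intro X; ext ω; simp [hSdef]
  haveI : ∀ j, IsProbabilityMeasure (μ.map (Y j)) :=
    fun j => Measure.isProbabilityMeasure_map (hYmeas j).aemeasurable
  haveI : ∀ j, IsProbabilityMeasure (μ.map (Z j)) :=
    fun j => Measure.isProbabilityMeasure_map (hZmeas j).aemeasurable
  have hZ : μ (⋃ h ∈ R, ⋂ j ∈ P h, {ω | t h ≤ Z j ω}) =
      Measure.pi (fun j => μ.map (Z j)) S := by
    rw [hevent Z, ← Measure.map_apply (measurable_pi_lambda _ hZmeas) hS,
      sd_map_pi μ Z hZmeas hZindep]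
  have hY : μ (⋃ h ∈ R, ⋂ j ∈ P h, {ω | t h ≤ Y j ω}) =
      Measure.pi (fun j => μ.map (Y j)) S := by
    rw [hevent Y, ← Measure.map_apply (measurable_pi_lambda _ hYmeas) hS,
      sd_map_pi μ Y hYmeas hYindep]
  rw [hZ, hY]
  refine sd_pi_le _ _ (fun j c => ?_) R P t
  rw [Measure.map_apply (hZmeas j) measurableSet_Ici,
    Measure.map_apply (hYmeas j) measurableSet_Ici]
  exact hdom j c
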